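/- Let N = (Q, Σ, δ, I, F) be an NFA with L = L(N). If the left language of every state of N is closed under the right Nerode quasiorder (for all q ∈ Q, cl_{≼_L}(W_{I,q}) = W_{I,q}), then the automata-based and Nerode quasiorders coincide: for all u, v, post_u(I) ⊆ post_v(I) iff u⁻¹L ⊆ v⁻¹L. -/

import Mathlib

/-- Left quotient (residual) u⁻¹L = {w | uw ∈ L}. -/
def leftQuot {α : Type*} (L : Set (List α)) (u : List α) : Set (List α) :=
  {w | u ++ w ∈ L}

/-- Upper closure of a set of words under the right Nerode quasiorder of L. -/
def clNerode {α : Type*} (L : Set (List α)) (S : Set (List α)) : Set (List α) :=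
  {w | ∃ x ∈ S, leftQuot L x ⊆ leftQuot L w}

lemma evalFrom_mono {α σ : Type*} (M : NFA α σ) {S T : Set σ} (h : S ⊆ T) :
    ∀ w : List α, M.evalFrom S w ⊆ M.evalFrom T w := by
  intro w
  induction w generalizing S T with
  | nil => exact h
  | cons a w ih =>
    apply ih
    intro q hq
    rcases M.mem_stepSet.1 hq with ⟨t, ht, hstep⟩
    exact M.mem_stepSet.2 ⟨t, h ht, hstep⟩

lemma evalFrom_append' {α σ : Type*} (M : NFA α σ) (S : Set σ) (u w : List α) :
    M.evalFrom S (u ++ w) = M.evalFrom (M.evalFrom S u) w := by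
  simp [NFA.evalFrom, List.foldl_append]

/-- If the left language of every state is closed under the right Nerode quasiorder,
then the automata-based and Nerode quasiorders coincide. -/
theorem closed_leftLangs_implies_autQO_eq_nerode {α σ : Type*} [Fintype σ]
    (M : NFA α σ) (L : Set (List α))
    (hL : L = {w : List α | (M.evalFrom M.start w ∩ M.accept).Nonempty})
    (hclosed : ∀ q : σ,
      clNerode L {w : List α | q ∈ M.evalFrom M.start w} =
        {w : List α | q ∈ M.evalFrom M.start w}) :
    ∀ u v : List α,
      M.evalFrom M.start u ⊆ M.evalFrom M.start v ↔ leftQuot L u ⊆ leftQuot L v := by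
  intro u v
  constructor
  · intro h w hw
    rw [leftQuot, Set.mem_setOf_eq, hL, Set.mem_setOf_eq] at *
    rw [evalFrom_append'] at hw ⊢
    rcases hw with ⟨q, hq, hacc⟩
    exact ⟨q, evalFrom_mono M h w hq, hacc⟩
  · intro h q hq
    have : v ∈ clNerode L {w : List α | q ∈ M.evalFrom M.start w} := ⟨u, hq, h⟩
    rw [hclosed q] at this
    exact this
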